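/- The Apéry constant satisfies ζ(3) = (2/7) ∫₀^{π/2} x(π - x) csc(x) dx. -/

import Mathlib

open Real MeasureTheory Filter Topology

noncomputable def Pk (r x : ℝ) : ℝ :=
  2*r*(1+r^2)*Real.sin x / (1 - 2*r^2*Real.cos (2*x) + r^4)

lemma den_pos {r : ℝ} (h0 : 0 ≤ r) (h1 : r < 1) (x : ℝ) :
    0 < 1 - 2*r^2*Real.cos (2*x) + r^4 := by
  have hc := Real.cos_le_one (2*x)
  have hr2 : r^2 < 1 := by nlinarith
  nlinarith [sq_nonneg (1 - r^2)]

lemma zpow_im (r x : ℝ) (n : ℕ) :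
    (((r : ℂ) * Complex.exp (x * Complex.I))^n).im = r^n * Real.sin (n*x) := by
  rw [mul_pow, ← Complex.exp_nat_mul]
  have h : (n : ℂ) * (x * Complex.I) = (((n:ℝ)*x : ℝ) : ℂ) * Complex.I := by push_cast; ring
  rw [h, ← Complex.ofReal_pow, Complex.mul_im, Complex.ofReal_re, Complex.ofReal_im,
    Complex.exp_ofReal_mul_I_im, Complex.exp_ofReal_mul_I_re]
  ring

lemma zpow_re (r x : ℝ) (n : ℕ) :
    (((r : ℂ) * Complex.exp (x * Complex.I))^n).re = r^n * Real.cos (n*x) := by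
  rw [mul_pow, ← Complex.exp_nat_mul]
  have h : (n : ℂ) * (x * Complex.I) = (((n:ℝ)*x : ℝ) : ℂ) * Complex.I := by push_cast; ring
  rw [h, ← Complex.ofReal_pow, Complex.mul_re, Complex.ofReal_re, Complex.ofReal_im,
    Complex.exp_ofReal_mul_I_im, Complex.exp_ofReal_mul_I_re]
  ring

lemma hasSum_Pk {r : ℝ} (h0 : 0 ≤ r) (h1 : r < 1) (x : ℝ) :
    HasSum (fun k : ℕ => 2*r^(2*k+1)*Real.sin ((2*(k:ℝ)+1)*x)) (Pk r x) := by
  set z : ℂ := (r : ℂ) * Complex.exp (x * Complex.I) with hz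
  have habs : ‖z‖ = r := by
    simp [hz, map_mul, Complex.norm_exp_ofReal_mul_I, abs_of_nonneg h0]
  have hz2 : ‖z^2‖ < 1 := by
    rw [norm_pow]
    simp only [habs]
    nlinarith
  have hgeo := (hasSum_geometric_of_norm_lt_one hz2).mul_left z
  have him := (hgeo.mapL Complex.imCLM).mul_left (2:ℝ)
  have hterm : ∀ k : ℕ, 2 * (Complex.imCLM (z * (z^2)^k)) = 2*r^(2*k+1) * Real.sin ((2*(k:ℝ)+1)*x) := by
    intro k
    have h2 : z * (z^2)^k = z^(2*k+1) := by ring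
    rw [h2, Complex.imCLM_apply, hz, zpow_im]
    push_cast
    ring
  have hden := den_pos h0 h1 x
  have hsum2 : 2 * (Complex.imCLM (z * (1 - z^2)⁻¹)) = Pk r x := by
    have hre : (z^2).re = r^2 * Real.cos (2*x) := by
      have := zpow_re r x 2; rw [hz]; rw [this]; norm_num
    have him2 : (z^2).im = r^2 * Real.sin (2*x) := by
      have := zpow_im r x 2; rw [hz]; rw [this]; norm_num
    have hns : Complex.normSq (1 - z^2) = 1 - 2*r^2*Real.cos (2*x) + r^4 := by
      rw [Complex.normSq_apply, Complex.sub_re, Complex.sub_im, Complex.one_re, Complex.one_im,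
        hre, him2]
      have hpy := Real.sin_sq_add_cos_sq (2*x)
      linear_combination r^4 * hpy
    have hre1 : z.re = r * Real.cos x := by
      rw [hz, Complex.mul_re, Complex.ofReal_re, Complex.ofReal_im,
        Complex.exp_ofReal_mul_I_re, Complex.exp_ofReal_mul_I_im]; ring
    have him1 : z.im = r * Real.sin x := by
      rw [hz, Complex.mul_im, Complex.ofReal_re, Complex.ofReal_im,
        Complex.exp_ofReal_mul_I_re, Complex.exp_ofReal_mul_I_im]; ring
    have wre : (1 - z^2).re = 1 - r^2*Real.cos (2*x) := by
      rw [Complex.sub_re, Complex.one_re, hre]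
    have wim : (1 - z^2).im = -(r^2*Real.sin (2*x)) := by
      rw [Complex.sub_im, Complex.one_im, him2]; ring
    rw [Complex.imCLM_apply, Complex.mul_im, Complex.inv_re, Complex.inv_im, hns, wre, wim,
      hre1, him1, Pk, Real.sin_two_mul, Real.cos_two_mul]
    have hpy := Real.sin_sq_add_cos_sq x
    have hden' : (1 - 2*r^2*(2*Real.cos x^2 - 1) + r^4) ≠ 0 := by
      rw [Real.cos_two_mul] at hden; linarith
    field_simp
    ring_nf
  rw [← hsum2]
  exact him.congr_fun fun k => (hterm k).symm

lemma Pk_mono {r s x : ℝ} (h0 : 0 ≤ r) (hrs : r ≤ s) (hs : s < 1)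
    (hx : 0 ≤ Real.sin x) : Pk r x ≤ Pk s x := by
  have hs0 : 0 ≤ s := le_trans h0 hrs
  have hr1 : r < 1 := lt_of_le_of_lt hrs hs
  have hdr := den_pos h0 hr1 x
  have hds := den_pos hs0 hs x
  rw [Pk, Pk, div_le_div_iff₀ hdr hds]
  set c := Real.cos (2*x) with hc
  have hc1 : -1 ≤ c := Real.neg_one_le_cos (2*x)
  have hrs1 : r * s < 1 := by nlinarith
  have key : 2*s*(1+s^2)*Real.sin x * (1 - 2*r^2*c + r^4)
      - 2*r*(1+r^2)*Real.sin x * (1 - 2*s^2*c + s^4)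
      = 2*Real.sin x * ((s-r)*(1-r*s)*(1+r^2)*(1+s^2))
        + 2*Real.sin x * (2*(1+c)*(r*s)*(s-r)*(1-r*s)) := by ring
  have e1 : 0 ≤ 2*Real.sin x * ((s-r)*(1-r*s)*(1+r^2)*(1+s^2)) := by
    apply mul_nonneg (by linarith)
    apply mul_nonneg (mul_nonneg (mul_nonneg (by linarith) (by linarith)) (by positivity))
    positivity
  have e2 : 0 ≤ 2*Real.sin x * (2*(1+c)*(r*s)*(s-r)*(1-r*s)) := by
    apply mul_nonneg (by linarith)
    apply mul_nonneg _ (by linarith)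
    apply mul_nonneg _ (by linarith)
    apply mul_nonneg _ (by positivity)
    linarith
  linarith

lemma Pk_tendsto {x : ℝ} (hx : Real.sin x ≠ 0) :
    Tendsto (fun m : ℕ => Pk (1 - 1/(m+1)) x) atTop (𝓝 (1 / Real.sin x)) := by
  have hr : Tendsto (fun m : ℕ => (1:ℝ) - 1/(m+1)) atTop (𝓝 1) := by
    have := tendsto_one_div_add_atTop_nhds_zero_nat (𝕜 := ℝ)
    simpa using tendsto_const_nhds.sub this
  have hden1 : (1 : ℝ) - 2*1^2*Real.cos (2*x) + 1^4 = 4 * Real.sin x ^ 2 := by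
    rw [Real.cos_two_mul]
    nlinarith [Real.sin_sq x]
  have hne : (1 : ℝ) - 2*1^2*Real.cos (2*x) + 1^4 ≠ 0 := by
    rw [hden1]; positivity
  have hcont : Tendsto (fun r : ℝ => Pk r x) (𝓝 1) (𝓝 (Pk 1 x)) := by
    unfold Pk
    apply Tendsto.div
    · exact (Continuous.tendsto (by continuity) 1)
    · exact (Continuous.tendsto (by continuity) 1)
    · exact hne
  have hval : Pk 1 x = 1 / Real.sin x := by
    rw [Pk, hden1]
    rw [div_eq_div_iff (by positivity) hx]
    ring
  rw [← hval]
  exact hcont.comp hr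


lemma integral_term (k : ℕ) :
    ∫ x in (0:ℝ)..(π/2), x*(π-x)*Real.sin ((2*(k:ℝ)+1)*x) = 2/(2*(k:ℝ)+1)^3 := by
  set n : ℝ := 2*(k:ℝ)+1 with hn
  have hn0 : (0:ℝ) < n := by positivity
  have hne : n ≠ 0 := ne_of_gt hn0
  set G : ℝ → ℝ := fun x =>
    -(x*(π-x))*Real.cos (n*x)/n + (π-2*x)*Real.sin (n*x)/n^2 - 2*Real.cos (n*x)/n^3 with hGdef
  have hderiv : ∀ x ∈ Set.uIcc (0:ℝ) (π/2), HasDerivAt G (x*(π-x)*Real.sin (n*x)) x := by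
    intro x _
    have hid : HasDerivAt (fun y : ℝ => n*y) n x := by
      simpa using (hasDerivAt_id x).const_mul n
    have hsin : HasDerivAt (fun y : ℝ => Real.sin (n*y)) (Real.cos (n*x)*n) x := hid.sin
    have hcos : HasDerivAt (fun y : ℝ => Real.cos (n*y)) (-Real.sin (n*x)*n) x := hid.cos
    have hp1 : HasDerivAt (fun y : ℝ => -(y*(π-y))) (-(π-2*x)) x := by
      have h := ((hasDerivAt_id x).mul ((hasDerivAt_const x π).sub (hasDerivAt_id x))).neg
      exact h.congr_deriv (by simp; ring)
    have h1 := hp1.mul hcos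
    have hp2 : HasDerivAt (fun y : ℝ => π-2*y) (-2 : ℝ) x := by
      exact ((hasDerivAt_const x π).sub ((hasDerivAt_id x).const_mul (2:ℝ))).congr_deriv (by simp)
    have h2 := hp2.mul hsin
    have h3 := (hcos.const_mul (2:ℝ)).div_const (n^3)
    have h := ((h1.div_const n).add (h2.div_const (n^2))).sub h3
    exact h.congr_deriv (by field_simp; ring)
  have hcont : IntervalIntegrable (fun x => x*(π-x)*Real.sin (n*x)) volume 0 (π/2) :=
    (by continuity : Continuous fun x : ℝ => x*(π-x)*Real.sin (n*x)).intervalIntegrable _ _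
  have heval := intervalIntegral.integral_eq_sub_of_hasDerivAt hderiv hcont
  have hint : (∫ x in (0:ℝ)..(π/2), x*(π-x)*Real.sin ((2*(k:ℝ)+1)*x))
      = ∫ x in (0:ℝ)..(π/2), x*(π-x)*Real.sin (n*x) := by rw [hn]
  rw [hint, heval]
  have hcospi : Real.cos (n*(π/2)) = 0 := by
    have harg : n*(π/2) = (k:ℝ)*π + π/2 := by rw [hn]; ring
    rw [harg, Real.cos_add_pi_div_two, Real.sin_nat_mul_pi]
    ring
  rw [hGdef]
  simp only [hcospi]
  norm_num
  left; left; ring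

lemma swap_lemma {r : ℝ} (h0 : 0 ≤ r) (h1 : r < 1) :
    ∫ x in Set.Ioc (0:ℝ) (π/2), x*(π-x)*Pk r x
      = ∑' k : ℕ, 4*r^(2*k+1)/(2*(k:ℝ)+1)^3 := by
  set F : ℕ → ℝ → ℝ := fun k x => (2*r^(2*k+1)) * (x*(π-x)*Real.sin ((2*(k:ℝ)+1)*x)) with hF
  have hFcont : ∀ k, Continuous (F k) := by
    intro k; apply Continuous.mul continuous_const; continuity
  have hFint : ∀ k, Integrable (F k) (volume.restrict (Set.Ioc (0:ℝ) (π/2))) := by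
    intro k
    exact (hFcont k).integrableOn_Ioc
  have hmeas : MeasurableSet (Set.Ioc (0:ℝ) (π/2)) := measurableSet_Ioc
  have hbound : ∀ k, ∀ x ∈ Set.Ioc (0:ℝ) (π/2), ‖F k x‖ ≤ π^2 * r^(2*k+1) := by
    intro k x hx
    obtain ⟨hx0, hx2⟩ := hx
    have hxpi : x ≤ π := le_trans hx2 (by linarith [pi_pos])
    have h2 : |x*(π-x)| ≤ π^2/2 := by
      rw [abs_of_nonneg (by nlinarith)]
      nlinarith [pi_pos]
    have h3 : |Real.sin ((2*(k:ℝ)+1)*x)| ≤ 1 := Real.abs_sin_le_one _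
    have hr : (0:ℝ) ≤ r^(2*k+1) := by positivity
    have e2 : |(2:ℝ)| = 2 := by norm_num
    have er : |r^(2*k+1)| = r^(2*k+1) := abs_of_nonneg hr
    have ex : |x| = x := abs_of_pos hx0
    have epi : |π - x| ≤ π := by
      rw [abs_of_nonneg (by linarith)]; linarith
    have hb : |x| * |π - x| * |Real.sin ((2*(k:ℝ)+1)*x)| ≤ (π/2) * π * 1 := by
      apply mul_le_mul _ h3 (abs_nonneg _) (by positivity)
      apply mul_le_mul (by rw [ex]; exact hx2) epi (abs_nonneg _) (by positivity)
    rw [hF]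
    simp only [norm_mul, Real.norm_eq_abs, e2, er]
    calc 2 * r^(2*k+1) * (|x| * |π-x| * |Real.sin ((2*(k:ℝ)+1)*x)|)
        ≤ 2 * r^(2*k+1) * ((π/2) * π * 1) := by
          apply mul_le_mul_of_nonneg_left hb (by positivity)
      _ = π^2 * r^(2*k+1) := by ring
  have hsummable : Summable fun k : ℕ => (π^2*(π/2)) * r^(2*k+1) := by
    have : Summable fun k : ℕ => (π^2*(π/2)*r) * (r^2)^k := by
      apply Summable.mul_left
      exact summable_geometric_of_lt_one (by positivity) (by nlinarith)
    convert this using 2 with k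
    ring
  have hFsum : Summable fun k => ∫ x in Set.Ioc (0:ℝ) (π/2), ‖F k x‖ := by
    apply Summable.of_nonneg_of_le (fun k => integral_nonneg (fun x => norm_nonneg _)) _ hsummable
    intro k
    calc (∫ x in Set.Ioc (0:ℝ) (π/2), ‖F k x‖)
        ≤ ∫ _x in Set.Ioc (0:ℝ) (π/2), π^2 * r^(2*k+1) := by
          apply setIntegral_mono_on (hFint k).norm ((integrableOn_const_iff).mpr (Or.inr (by
            rw [Real.volume_Ioc]; exact ENNReal.ofReal_lt_top))) hmeas
          exact hbound k
      _ = (π^2*(π/2)) * r^(2*k+1) := by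
          rw [setIntegral_const, Real.volume_real_Ioc, smul_eq_mul]
          rw [max_eq_left (by rw [sub_zero]; positivity)]
          ring
  have hswap := integral_tsum_of_summable_integral_norm hFint hFsum
  have hptwise : ∀ x : ℝ, x*(π-x)*Pk r x = ∑' k, F k x := by
    intro x
    have := (hasSum_Pk h0 h1 x).mul_left (x*(π-x))
    rw [← this.tsum_eq]
    apply tsum_congr
    intro k
    rw [hF]
    ring
  calc (∫ x in Set.Ioc (0:ℝ) (π/2), x*(π-x)*Pk r x)
      = ∫ x in Set.Ioc (0:ℝ) (π/2), ∑' k, F k x := by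
        apply integral_congr_ae
        exact Eventually.of_forall (fun x => hptwise x)
    _ = ∑' k, ∫ x in Set.Ioc (0:ℝ) (π/2), F k x := hswap.symm
    _ = ∑' k : ℕ, 4*r^(2*k+1)/(2*(k:ℝ)+1)^3 := by
        apply tsum_congr
        intro k
        have : (∫ x in Set.Ioc (0:ℝ) (π/2), F k x)
            = ∫ x in (0:ℝ)..(π/2), F k x := by
          rw [intervalIntegral.integral_of_le (by positivity)]
        rw [this, hF]
        rw [intervalIntegral.integral_const_mul, integral_term k]
        field_simp
        ring

theorem zeta3_csc_integral :
    (∑' n : ℕ, 1 / ((n : ℝ) + 1) ^ 3) =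
      (2 / 7) * ∫ x in (0 : ℝ)..(π / 2), x * (π - x) * (1 / Real.sin x) := by
  have hpi := pi_pos
  set rs : ℕ → ℝ := fun m => 1 - 1/(m+1) with hrs
  have hr0 : ∀ m, 0 ≤ rs m := by
    intro m
    have : 1/((m:ℝ)+1) ≤ 1 := by
      rw [div_le_one (by positivity)]; simp
    simpa [hrs] using this
  have hr1 : ∀ m, rs m < 1 := by
    intro m
    have : 0 < 1/((m:ℝ)+1) := by positivity
    simp only [hrs]; linarith
  have hrmono : Monotone rs := by
    intro a b hab
    simp only [hrs]
    have : 1/((b:ℝ)+1) ≤ 1/((a:ℝ)+1) := by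
      apply one_div_le_one_div_of_le (by positivity)
      have : (a:ℝ) ≤ b := Nat.cast_le.mpr hab
      linarith
    linarith
  set g : ℝ → ℝ := fun x => x * (π - x) * (1 / Real.sin x) with hg
  set s : Set ℝ := Set.Ioc (0:ℝ) (π/2) with hs
  have hmeas : MeasurableSet s := measurableSet_Ioc
  -- each approximant integrable
  have hPkcont : ∀ m, Continuous (fun x => x*(π-x)*Pk (rs m) x) := by
    intro m
    apply Continuous.mul (by continuity)
    apply Continuous.div (by continuity) (by continuity)
    exact fun x => (den_pos (hr0 m) (hr1 m) x).ne'
  have hfint : ∀ m, Integrable (fun x => x*(π-x)*Pk (rs m) x) (volume.restrict s) :=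
    fun m => (hPkcont m).integrableOn_Ioc
  -- limit integrable
  have hgmeas : Measurable g := by
    apply Measurable.mul
    · exact (measurable_id.mul (measurable_const.sub measurable_id))
    · exact (Real.measurable_sin.const_div 1)
  have hsinpos : ∀ x ∈ s, 0 < Real.sin x := by
    intro x hx
    exact Real.sin_pos_of_pos_of_lt_pi hx.1 (lt_of_le_of_lt hx.2 (by linarith))
  have hgbound : ∀ x ∈ s, ‖g x‖ ≤ π^2/2 := by
    intro x hx
    obtain ⟨hx0, hx2⟩ := hx
    have hsin := hsinpos x ⟨hx0, hx2⟩
    have hjordan := Real.mul_le_sin hx0.le hx2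
    have hgval : g x = x*(π-x)/Real.sin x := by rw [hg]; ring
    rw [hgval, Real.norm_eq_abs, abs_of_nonneg (by
      apply div_nonneg _ hsin.le
      nlinarith)]
    rw [div_le_iff₀ hsin]
    have h5 : π * x ≤ π^2/2 * Real.sin x := by
      have h6 := mul_le_mul_of_nonneg_left hjordan (by positivity : (0:ℝ) ≤ π^2/2)
      calc π*x = π^2/2 * (2/π*x) := by field_simp
        _ ≤ π^2/2 * Real.sin x := h6
    nlinarith [h5, sq_nonneg x]
  have hgint : Integrable g (volume.restrict s) := by
    apply Integrable.mono' (g := fun _ => π^2/2)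
    · exact (integrableOn_const_iff).mpr (Or.inr (by rw [hs, Real.volume_Ioc]; exact ENNReal.ofReal_lt_top))
    · exact hgmeas.aestronglyMeasurable
    · exact (ae_restrict_iff' hmeas).mpr (Eventually.of_forall hgbound)
  -- monotone convergence
  have hmono : ∀ᵐ x ∂(volume.restrict s), Monotone fun m => x*(π-x)*Pk (rs m) x := by
    apply (ae_restrict_iff' hmeas).mpr
    apply Eventually.of_forall
    intro x hx a b hab
    have hxs : 0 ≤ Real.sin x := (hsinpos x hx).le
    apply mul_le_mul_of_nonneg_left (Pk_mono (hr0 a) (hrmono hab) (hr1 b) hxs)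
    nlinarith [hx.1, hx.2]
  have htends : ∀ᵐ x ∂(volume.restrict s), Tendsto (fun m => x*(π-x)*Pk (rs m) x) atTop (𝓝 (g x)) := by
    apply (ae_restrict_iff' hmeas).mpr
    apply Eventually.of_forall
    intro x hx
    have := (Pk_tendsto (hsinpos x hx).ne').const_mul (x*(π-x))
    simpa [hg, hrs, one_div, mul_comm] using this
  have hMCT := integral_tendsto_of_tendsto_of_monotone hfint hgint hmono htends
  -- rewrite via swap lemma
  have hMCT2 : Tendsto (fun m => ∑' k : ℕ, 4*(rs m)^(2*k+1)/(2*(k:ℝ)+1)^3) atTop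
      (𝓝 (∫ x in s, g x)) := by
    apply hMCT.congr
    intro m
    rw [← swap_lemma (hr0 m) (hr1 m)]
  -- sum side limit (Tannery)
  have hbound : Summable (fun k : ℕ => 4/((k:ℝ)+1)^3) := by
    apply Summable.mul_left
    have h1 : Summable (fun n : ℕ => 1 / ((n:ℝ))^3) := summable_one_div_nat_pow.mpr (by norm_num)
    have := (_root_.summable_nat_add_iff 1).mpr h1
    apply this.congr
    intro n
    push_cast
    ring
  have htan : Tendsto (fun m => ∑' k : ℕ, 4*(rs m)^(2*k+1)/(2*(k:ℝ)+1)^3) atTop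
      (𝓝 (∑' k : ℕ, 4/(2*(k:ℝ)+1)^3)) := by
    apply tendsto_tsum_of_dominated_convergence hbound
    · intro k
      have hpow : Tendsto (fun m => (rs m)^(2*k+1)) atTop (𝓝 1) := by
        have hr : Tendsto rs atTop (𝓝 1) := by
          have := tendsto_one_div_add_atTop_nhds_zero_nat (𝕜 := ℝ)
          simpa [hrs] using tendsto_const_nhds.sub this
        simpa using hr.pow (2*k+1)
      have := (hpow.const_mul (4:ℝ)).div_const ((2*(k:ℝ)+1)^3)
      simpa using this
    · apply Eventually.of_forall
      intro m k
      have hk1 : ((k:ℝ)+1)^3 ≤ (2*(k:ℝ)+1)^3 := by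
        apply pow_le_pow_left₀ (by positivity) (by push_cast; linarith) 3
      have hrpow : (rs m)^(2*k+1) ≤ 1 := pow_le_one₀ (hr0 m) (hr1 m).le
      have hnn : (0:ℝ) ≤ 4*(rs m)^(2*k+1)/(2*(k:ℝ)+1)^3 := by
        apply div_nonneg _ (by positivity)
        have := pow_nonneg (hr0 m) (2*k+1)
        linarith
      rw [Real.norm_eq_abs, abs_of_nonneg hnn]
      apply div_le_div₀ (by positivity) _ (by positivity) hk1
      nlinarith [pow_nonneg (hr0 m) (2*k+1)]
  have hkey : ∫ x in s, g x = ∑' k : ℕ, 4/(2*(k:ℝ)+1)^3 := tendsto_nhds_unique hMCT2 htan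
  -- final arithmetic
  set f : ℕ → ℝ := fun n => 1 / ((n : ℝ) + 1) ^ 3 with hf
  have hsumf : Summable f := by
    have h1 : Summable (fun n : ℕ => 1 / ((n:ℝ))^3) := summable_one_div_nat_pow.mpr (by norm_num)
    have := (_root_.summable_nat_add_iff 1).mpr h1
    apply this.congr
    intro n
    push_cast
    rw [hf]
  have he : Summable (fun k => f (2*k)) := by
    apply Summable.of_nonneg_of_le (fun k => by positivity) _ hsumf
    intro k
    rw [hf]
    apply div_le_div_of_nonneg_left (by norm_num) (by positivity)
    apply pow_le_pow_left₀ (by positivity) _ 3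
    push_cast
    linarith
  have ho : Summable (fun k => f (2*k+1)) := by
    apply Summable.of_nonneg_of_le (fun k => by positivity) _ hsumf
    intro k
    rw [hf]
    apply div_le_div_of_nonneg_left (by norm_num) (by positivity)
    apply pow_le_pow_left₀ (by positivity) _ 3
    push_cast
    linarith
  have hEO := tsum_even_add_odd he ho
  have hOdd : ∑' k : ℕ, f (2*k+1) = (1/8) * ∑' n, f n := by
    rw [← tsum_mul_left]
    apply tsum_congr
    intro k
    rw [hf]
    push_cast
    field_simp
    ring
  have hEven : ∑' k : ℕ, f (2*k) = ∑' k : ℕ, 1/(2*(k:ℝ)+1)^3 := by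
    apply tsum_congr
    intro k
    rw [hf]
    push_cast
    ring_nf
  have hL : ∑' k : ℕ, 4/(2*(k:ℝ)+1)^3 = 4 * ∑' k : ℕ, 1/(2*(k:ℝ)+1)^3 := by
    rw [← tsum_mul_left]
    apply tsum_congr
    intro k
    ring
  have hO : ∑' k : ℕ, 1/(2*(k:ℝ)+1)^3 = (7/8) * ∑' n, f n := by
    rw [← hEven]
    have : ∑' k : ℕ, f (2*k) = ∑' n, f n - ∑' k : ℕ, f (2*k+1) := by linarith [hEO]
    rw [this, hOdd]
    ring
  have hIoc : (∫ x in (0:ℝ)..(π/2), x * (π - x) * (1 / Real.sin x)) = ∫ x in s, g x := by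
    rw [intervalIntegral.integral_of_le (by positivity), hs, hg]
  rw [hIoc, hkey, hL, hO]
  ring
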